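/- Let S′ be a subprogram obtained from a HeyVL program S by erasing only reductive statements (replacing them with skip). Then vp[S](X) ≤ vp[S′](X) pointwise for all expectations X. Consequently, if there exists a state where pre X exceeds vp[S′](Y), then S′ is an error-witnessing slice of S: any counterexample state of S′ (i.e., a state σ with X(σ) ≰ vp[S′](Y)(σ)) is also a counterexample state of S. -/

import Mathlib

open scoped ENNReal

/-- HeyVL statements over variables `Var` and values `Val`.
Program states are functions `Var → Val`, expectations are `(Var → Val) → ℝ≥0∞`. -/
inductive Stmt (Var Val : Type) where
  /-- effectless statement (used for erased statements) -/
  | skip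
  /-- probabilistic assignment `x ≈ μ` for a finite-support distribution
  `μ = p₁·t₁ + … + pₙ·tₙ` given as a list of pairs of probabilities and
  value expressions -/
  | passign (x : Var) (μ : List (ℝ≥0∞ × ((Var → Val) → Val)))
  | assert (Y : (Var → Val) → ℝ≥0∞)
  | assume_ (Y : (Var → Val) → ℝ≥0∞)
  | coassert (Y : (Var → Val) → ℝ≥0∞)
  | coassume (Y : (Var → Val) → ℝ≥0∞)
  | havoc (x : Var)
  | cohavoc (x : Var)
  | validate
  | covalidate
  | reward (a : (Var → Val) → ℝ≥0∞)
  | seq (S₁ S₂ : Stmt Var Val)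
  | demonic (S₁ S₂ : Stmt Var Val)
  | angelic (S₁ S₂ : Stmt Var Val)

variable {Var Val : Type} [DecidableEq Var]

/-- The verification pre-expectation transformer `vp[S]`. -/
noncomputable def vp : Stmt Var Val → ((Var → Val) → ℝ≥0∞) → ((Var → Val) → ℝ≥0∞)
  | .skip, X => X
  | .passign x μ, X =>
      fun σ => (μ.map (fun pt => pt.1 * X (Function.update σ x (pt.2 σ)))).sum
  | .assert Y, X => fun σ => Y σ ⊓ X σ
  | .assume_ Y, X => fun σ => if Y σ ≤ X σ then ⊤ else X σ
  | .coassert Y, X => fun σ => Y σ ⊔ X σ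
  | .coassume Y, X => fun σ => if X σ ≤ Y σ then 0 else X σ
  | .havoc x, X => fun σ => ⨅ v : Val, X (Function.update σ x v)
  | .cohavoc x, X => fun σ => ⨆ v : Val, X (Function.update σ x v)
  | .validate, X => fun σ => if X σ = ⊤ then ⊤ else 0
  | .covalidate, X => fun σ => if X σ = 0 then 0 else ⊤
  | .reward a, X => fun σ => X σ + a σ
  | .seq S₁ S₂, X => vp S₁ (vp S₂ X)
  | .demonic S₁ S₂, X => fun σ => vp S₁ X σ ⊓ vp S₂ X σ
  | .angelic S₁ S₂, X => fun σ => vp S₁ X σ ⊔ vp S₂ X σ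

/-- A statement is reductive if `vp[S](X) ≤ X` pointwise for all expectations `X`. -/
def Reductive (S : Stmt Var Val) : Prop :=
  ∀ (X : (Var → Val) → ℝ≥0∞) (σ : Var → Val), vp S X σ ≤ X σ

/-- `ErasesReductive S S′` holds iff `S′` is a subprogram obtained from `S` by
erasing only reductive statements (replacing them with `skip`), lifted
compositionally through sequencing and both choice constructs. -/
inductive ErasesReductive : Stmt Var Val → Stmt Var Val → Prop
  | refl (S : Stmt Var Val) : ErasesReductive S S
  | erase (S : Stmt Var Val) (h : Reductive S) : ErasesReductive S .skip
  | seq {S₁ S₂ S₁' S₂' : Stmt Var Val} :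
      ErasesReductive S₁ S₁' → ErasesReductive S₂ S₂' →
      ErasesReductive (.seq S₁ S₂) (.seq S₁' S₂')
  | demonic {S₁ S₂ S₁' S₂' : Stmt Var Val} :
      ErasesReductive S₁ S₁' → ErasesReductive S₂ S₂' →
      ErasesReductive (.demonic S₁ S₂) (.demonic S₁' S₂')
  | angelic {S₁ S₂ S₁' S₂' : Stmt Var Val} :
      ErasesReductive S₁ S₁' → ErasesReductive S₂ S₂' →
      ErasesReductive (.angelic S₁ S₂) (.angelic S₁' S₂')

/-- Erasing reductive statements yields `vp[S](X) ≤ vp[S′](X)` pointwise; hence if `S′`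
has a counterexample state w.r.t. `(X, Y)`, then `S′` is an error-witnessing slice of
`S`: every counterexample state of `S′` is a counterexample state of `S`. -/
theorem vp_mono (S : Stmt Var Val) {X Y : (Var → Val) → ℝ≥0∞}
    (h : ∀ σ, X σ ≤ Y σ) : ∀ σ, vp S X σ ≤ vp S Y σ := by
  induction S generalizing X Y with
  | skip => exact h
  | passign x μ =>
      intro σ
      simp only [vp]
      apply List.sum_le_sum
      intro pt _
      exact mul_le_mul_right (h _) _
  | assert Z => exact fun σ => inf_le_inf_left _ (h σ)
  | assume_ Z =>
      intro σ
      simp only [vp]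
      split <;> split
      · exact le_rfl
      · exact absurd ((by assumption : Z σ ≤ X σ).trans (h σ)) (by assumption)
      · exact le_top
      · exact h σ
  | coassert Z => exact fun σ => sup_le_sup_left (h σ) _
  | coassume Z =>
      intro σ
      simp only [vp]
      split <;> split
      · exact le_rfl
      · exact zero_le
      · exact absurd ((h σ).trans (by assumption)) (by assumption)
      · exact h σ
  | havoc x => exact fun σ => iInf_mono fun v => h _
  | cohavoc x => exact fun σ => iSup_mono fun v => h _
  | validate =>
      intro σ
      simp only [vp]
      split <;> split
      · exact le_rfl
      · exact absurd (top_le_iff.mp ((by assumption : X σ = ⊤) ▸ h σ)) (by assumption)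
      · exact le_top
      · exact le_rfl
  | covalidate =>
      intro σ
      simp only [vp]
      split <;> split
      · exact le_rfl
      · exact zero_le
      · exact absurd (le_antisymm ((by assumption : Y σ = 0) ▸ h σ) zero_le) (by assumption)
      · exact le_rfl
  | reward a => exact fun σ => add_le_add_left (h σ) _
  | seq S₁ S₂ ih₁ ih₂ => exact ih₁ (ih₂ h)
  | demonic S₁ S₂ ih₁ ih₂ => exact fun σ => inf_le_inf (ih₁ h σ) (ih₂ h σ)
  | angelic S₁ S₂ ih₁ ih₂ => exact fun σ => sup_le_sup (ih₁ h σ) (ih₂ h σ)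

theorem erases_le (S S' : Stmt Var Val) (h : ErasesReductive S S') :
    ∀ (X : (Var → Val) → ℝ≥0∞) (σ : Var → Val), vp S X σ ≤ vp S' X σ := by
  induction h with
  | refl S => exact fun _ _ => le_rfl
  | erase S hr => exact hr
  | seq h₁ h₂ ih₁ ih₂ =>
      intro X σ
      exact (vp_mono _ (ih₂ X) σ).trans (ih₁ _ σ)
  | demonic h₁ h₂ ih₁ ih₂ => exact fun X σ => inf_le_inf (ih₁ X σ) (ih₂ X σ)
  | angelic h₁ h₂ ih₁ ih₂ => exact fun X σ => sup_le_sup (ih₁ X σ) (ih₂ X σ)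

theorem erase_reductive_errorWitnessing (S S' : Stmt Var Val)
    (h : ErasesReductive S S') :
    (∀ (X : (Var → Val) → ℝ≥0∞) (σ : Var → Val), vp S X σ ≤ vp S' X σ) ∧
    (∀ (X Y : (Var → Val) → ℝ≥0∞), (∃ σ, ¬ X σ ≤ vp S' Y σ) →
      ∀ σ, ¬ X σ ≤ vp S' Y σ → ¬ X σ ≤ vp S Y σ) := by
  refine ⟨erases_le S S' h, fun X Y _ σ hσ hc => hσ (hc.trans (erases_le S S' h Y σ))⟩
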